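/- With u₁(s) = ∂₁[|g|^{1/2}𝓑₂](0,s,0), u₂(s) = (∂₂[|g|^{1/2}𝓑₂] + ∂₃[|g|^{1/2}𝓑₃])(0,s,0), α(r,s) the metric coefficient, and φ(s) the angle of the magnetic field along Γ (cos φ = 𝓑₁(0,s,0), sin φ = 𝓑₂(0,s,0)), the following identity holds for all s: −2u₂(s) cos φ(s) + 2u₁(s) sin φ(s) + cos²φ(s)·∂_r(α^{-1})(0,s) = 0. -/

import Mathlib

noncomputable section

/-- The algebraic cancellation of Lemma `lem.annulr`:
with `u₁ = ½ sin φ ∂_rα + ∂₁𝓑₂`, `u₂ = −½ cos φ ∂_rα − ∂₁𝓑₁` (at `(0,s,0)`), the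
normalization `𝓑₁² + α 𝓑₂² + 𝓑₃² = 1` on the boundary, `α(0) = 1`,
`𝓑₁(0) = cos φ`, `𝓑₂(0) = sin φ`, `𝓑₃(0) = 0`, one has
`−2u₂ cos φ + 2u₁ sin φ + cos²φ ∂_r(α⁻¹) = 0`.
(Here `s` is fixed and all quantities are viewed as functions of `r`.) -/
theorem statement15
    (φ : ℝ) (B1 B2 B3 αf : ℝ → ℝ)
    (hB1d : DifferentiableAt ℝ B1 0) (hB2d : DifferentiableAt ℝ B2 0)
    (hB3d : DifferentiableAt ℝ B3 0) (hαd : DifferentiableAt ℝ αf 0)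
    (hB10 : B1 0 = Real.cos φ) (hB20 : B2 0 = Real.sin φ) (hB30 : B3 0 = 0)
    (hα0 : αf 0 = 1)
    (hnorm : ∀ r, B1 r ^ 2 + αf r * B2 r ^ 2 + B3 r ^ 2 = 1)
    (u1 u2 : ℝ)
    (hu1 : u1 = (1/2) * Real.sin φ * deriv αf 0 + deriv B2 0)
    (hu2 : u2 = -(1/2) * Real.cos φ * deriv αf 0 - deriv B1 0) :
    -2 * u2 * Real.cos φ + 2 * u1 * Real.sin φ
      + Real.cos φ ^ 2 * deriv (fun r => (αf r)⁻¹) 0 = 0 := by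
  have hB1 := hB1d.hasDerivAt
  have hB2 := hB2d.hasDerivAt
  have hB3 := hB3d.hasDerivAt
  have hα := hαd.hasDerivAt
  -- derivative of the normalization identity
  have hsum : HasDerivAt (fun r => B1 r ^ 2 + αf r * B2 r ^ 2 + B3 r ^ 2)
      (2 * B1 0 * deriv B1 0 + (deriv αf 0 * B2 0 ^ 2 + αf 0 * (2 * B2 0 * deriv B2 0))
        + 2 * B3 0 * deriv B3 0) 0 := by
    have h1 : HasDerivAt (fun r => B1 r ^ 2) (2 * B1 0 * deriv B1 0) 0 := by
      simpa [mul_comm, mul_assoc, mul_left_comm] using hB1.fun_pow 2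
    have h2 : HasDerivAt (fun r => B2 r ^ 2) (2 * B2 0 * deriv B2 0) 0 := by
      simpa [mul_comm, mul_assoc, mul_left_comm] using hB2.fun_pow 2
    have h3 : HasDerivAt (fun r => B3 r ^ 2) (2 * B3 0 * deriv B3 0) 0 := by
      simpa [mul_comm, mul_assoc, mul_left_comm] using hB3.fun_pow 2
    exact ((h1.add (hα.mul h2)).add h3)
  have hconst : HasDerivAt (fun r => B1 r ^ 2 + αf r * B2 r ^ 2 + B3 r ^ 2) 0 0 := by
    have : (fun r => B1 r ^ 2 + αf r * B2 r ^ 2 + B3 r ^ 2) = fun _ => (1:ℝ) := by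
      funext r; exact hnorm r
    rw [this]; exact hasDerivAt_const 0 1
  have hkey : 2 * B1 0 * deriv B1 0 + (deriv αf 0 * B2 0 ^ 2 + αf 0 * (2 * B2 0 * deriv B2 0))
      + 2 * B3 0 * deriv B3 0 = 0 := hsum.unique hconst
  rw [hB10, hB20, hB30, hα0] at hkey
  -- derivative of α⁻¹
  have hinv : deriv (fun r => (αf r)⁻¹) 0 = -deriv αf 0 := by
    have : HasDerivAt (fun r => (αf r)⁻¹) (-deriv αf 0 / αf 0 ^ 2) 0 := hα.inv (by rw [hα0]; norm_num)
    rw [this.deriv, hα0]; ring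
  rw [hu1, hu2, hinv]
  have hpy : Real.sin φ ^ 2 = 1 - Real.cos φ ^ 2 := by
    have := Real.sin_sq_add_cos_sq φ; linarith
  nlinarith [hkey, hpy]
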